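/- Let K/F be a cyclic cubic extension with generator σ and c ∈ K×. The map ω : K ⊗_F K → K³ sending x ⊗ y to (xy, x·σ(y), x·σ²(y)) is a K-algebra isomorphism carrying the multiplication 1 ⊗ μ (where μ(x,y) = x·σ(y) − c·σ(x)·y) to the multiplication ν on K³ given coordinatewise by ν((x_i),(y_i)) = (x_i y_{i+1} − c_i x_{i+1} y_i), where c_i = σ^i(c) and indices are mod 3. -/

import Mathlib

open scoped TensorProduct
open Matrix

open Module Matrix in
noncomputable def omegaAux (F K : Type*) [Field F] [Field K] [Algebra F K]
    (σ : K ≃ₐ[F] K) : K ⊗[F] K →ₗ[K] (Fin 3 → K) :=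
  TensorProduct.AlgebraTensorModule.lift
    { toFun := fun x => x • (LinearMap.pi fun i : Fin 3 => (σ ^ (i : ℕ)).toLinearMap)
      map_add' := fun x y => add_smul x y _
      map_smul' := fun r x => mul_smul r x _
      }

lemma omegaAux_tmul (F K : Type*) [Field F] [Field K] [Algebra F K]
    (σ : K ≃ₐ[F] K) (x y : K) :
    omegaAux F K σ (x ⊗ₜ[F] y) = fun i : Fin 3 => x * (σ ^ (i : ℕ)) y := by
  ext i
  simp [omegaAux, smul_eq_mul]

/-- The splitting isomorphism `ω : K ⊗_F K ≃ K³`, `x ⊗ y ↦ (x·σ^i(y))_i`, is a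
`K`-linear isomorphism carrying the base-changed twisted-field multiplication
`1 ⊗ μ` (determined on pure tensors by `(a ⊗ x)·(b ⊗ y) = ab ⊗ μ(x,y)`) to the
multiplication `ν((x_i),(y_i)) = (x_i y_{i+1} − σ^i(c) x_{i+1} y_i)` on `K³`. -/
theorem stmt2 (F K : Type*) [Field F] [Field K] [Algebra F K] [IsGalois F K]
    (hdim : Module.finrank F K = 3)
    (σ : K ≃ₐ[F] K) (hσ : ∀ τ : K ≃ₐ[F] K, τ ∈ Subgroup.zpowers σ)
    (c : K) :
    ∃ ω : (K ⊗[F] K) ≃ₗ[K] (Fin 3 → K),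
      (∀ x y : K, ω (x ⊗ₜ[F] y) = fun i : Fin 3 => x * (σ ^ (i : ℕ)) y) ∧
      (∀ a b x y : K,
        ω ((a * b) ⊗ₜ[F] (x * σ y - c * σ x * y)) = fun i : Fin 3 =>
          ω (a ⊗ₜ[F] x) i * ω (b ⊗ₜ[F] y) (i + 1)
            - (σ ^ (i : ℕ)) c * ω (a ⊗ₜ[F] x) (i + 1) * ω (b ⊗ₜ[F] y) i) := by
  classical
  haveI : FiniteDimensional F K := FiniteDimensional.of_finrank_pos (by omega)
  -- the order of σ is 3
  have htop : Subgroup.zpowers σ = ⊤ := by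
    rw [eq_top_iff]; intro τ _; exact hσ τ
  have hord : orderOf σ = 3 := by
    have h1 : Nat.card (K ≃ₐ[F] K) = 3 := by
      rw [IsGalois.card_aut_eq_finrank F K, hdim]
    rw [← Nat.card_zpowers, htop, Subgroup.card_top, h1]
  -- linear independence of the characters σ^i, i < 3
  have hinj_pow : Function.Injective (fun i : Fin 3 => (σ ^ (i : ℕ))) := by
    intro i j hij
    have hij' : σ ^ (i : ℕ) = σ ^ (j : ℕ) := hij
    have hmod := pow_eq_pow_iff_modEq.mp hij'
    rw [hord] at hmod
    have h2 : (i : ℕ) % 3 = (j : ℕ) % 3 := hmod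
    have hi := i.isLt
    have hj := j.isLt
    exact Fin.ext (by omega)
  set m : Fin 3 → (K →* K) := fun i => MonoidHomClass.toMonoidHom (σ ^ (i : ℕ)) with hm
  have hchar : LinearIndependent K (fun i : Fin 3 => ⇑(m i)) := by
    have h := linearIndependent_monoidHom K K
    have hι : Function.Injective m := by
      intro i j hij
      apply hinj_pow
      ext z
      exact DFunLike.congr_fun hij z
    exact h.comp m hι
  set φ := omegaAux F K σ with hφ
  -- surjectivity
  set B := Module.finBasisOfFinrankEq F K hdim with hB
  set M : Matrix (Fin 3) (Fin 3) K := Matrix.of fun i j => (σ ^ (i : ℕ)) (B j) with hM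
  have hrows : LinearIndependent K (fun i => M i) := by
    rw [Fintype.linearIndependent_iff]
    intro g hg
    have hL : (∑ i : Fin 3, g i • ((σ ^ (i : ℕ)).toLinearMap : K →ₗ[F] K)) = 0 := by
      apply B.ext
      intro j
      have := congr_fun hg j
      simpa [M, Finset.sum_apply, smul_eq_mul] using this
    have hfun : (∑ i : Fin 3, g i • ⇑(m i)) = 0 := by
      funext y
      have := DFunLike.congr_fun hL y
      simpa [hm, Finset.sum_apply, smul_eq_mul] using this
    exact Fintype.linearIndependent_iff.mp hchar g hfun
  have hcols : LinearIndependent K (fun j => Mᵀ j) :=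
    Matrix.linearIndependent_cols_iff_isUnit.mpr
      (Matrix.linearIndependent_rows_iff_isUnit.mp hrows)
  have hmem : ∀ j : Fin 3, Mᵀ j ∈ LinearMap.range φ := by
    intro j
    refine ⟨(1 : K) ⊗ₜ[F] (B j), ?_⟩
    rw [hφ, omegaAux_tmul]
    funext i
    simp [M, Matrix.transpose_apply]
  have hrange : LinearMap.range φ = ⊤ := by
    apply Submodule.eq_top_of_finrank_eq
    have hle : Module.finrank K (Fin 3 → K) ≤ Module.finrank K (LinearMap.range φ) := by
      have hspan : Submodule.span K (Set.range fun j => Mᵀ j) ≤ LinearMap.range φ := by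
        rw [Submodule.span_le]
        rintro v ⟨j, rfl⟩
        exact hmem j
      have h1 : Module.finrank K (Submodule.span K (Set.range fun j => Mᵀ j)) = 3 := by
        rw [finrank_span_eq_card hcols]
        simp
      calc Module.finrank K (Fin 3 → K) = 3 := by simp
        _ = _ := h1.symm
        _ ≤ _ := Submodule.finrank_mono hspan
    exact le_antisymm (Submodule.finrank_le _) hle
  have hsurj : Function.Surjective φ := LinearMap.range_eq_top.mp hrange
  have hfr : Module.finrank K (K ⊗[F] K) = Module.finrank K (Fin 3 → K) := by
    rw [Module.finrank_baseChange, hdim]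
    simp
  have hinj : Function.Injective φ :=
    (LinearMap.injective_iff_surjective_of_finrank_eq_finrank hfr).mpr hsurj
  refine ⟨LinearEquiv.ofBijective φ ⟨hinj, hsurj⟩, ?_, ?_⟩
  · intro x y
    show φ (x ⊗ₜ[F] y) = _
    exact omegaAux_tmul F K σ x y
  · intro a b x y
    have key : ∀ i : Fin 3, (σ ^ (((i + 1 : Fin 3)) : ℕ)) = σ ^ ((i : ℕ) + 1) := by
      intro i
      have h1 : (((i + 1 : Fin 3)) : ℕ) = ((i : ℕ) + 1) % 3 := by
        simp [Fin.val_add]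
      have h2 := pow_mod_orderOf (x := σ) ((i : ℕ) + 1)
      rw [hord] at h2
      rw [h1]
      exact h2
    funext i
    show φ _ i = φ _ i * φ _ (i+1) - _ * φ _ (i+1) * φ _ i
    rw [hφ, omegaAux_tmul, omegaAux_tmul, omegaAux_tmul]
    simp only [key i, pow_succ, AlgEquiv.mul_apply, map_sub, _root_.map_mul]
    ring
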